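/- arXiv:1304.3931 — 4 statements merged into one kernel-verified Lean document; each statement's English description precedes it below -/
import Mathlib

section
/- There do not exist 2×2 Hermitian positive semidefinite complex matrices M₁₁, M₁₂, M₂₁, M₂₂ such that M₁₁ + M₁₂ = (1/2)·[[1,0],[0,0]], M₂₁ + M₂₂ = (1/2)·[[0,0],[0,1]], M₁₁ + M₂₁ = (1/4)·[[1,−1],[−1,1]], and M₁₂ + M₂₂ = (1/4)·[[1,1],[1,1]]. (Hence the naive matrix-valued joint-density marginal constraint, requiring an n×n positive semidefinite joint density whose partial integrals equal the two given matrix-valued marginals, is in general infeasible.) -/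
open Matrix ComplexOrder

private lemma dot_single {M : Matrix (Fin 2) (Fin 2) ℂ} (i : Fin 2) :
    star (Pi.single i 1) ⬝ᵥ M *ᵥ (Pi.single i 1) = M i i := by
  fin_cases i <;>
    simp [dotProduct, mulVec, Fin.sum_univ_two, Pi.single_apply]

private lemma diag_nonneg {M : Matrix (Fin 2) (Fin 2) ℂ} (hM : M.PosSemidef) (i : Fin 2) :
    0 ≤ M i i := by
  have := hM.dotProduct_mulVec_nonneg (Pi.single i 1)
  rwa [dot_single] at this

private lemma offdiag_zero {M : Matrix (Fin 2) (Fin 2) ℂ} (hM : M.PosSemidef) (i j : Fin 2)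
    (h : M i i = 0) : M j i = 0 := by
  have h0 : star (Pi.single i 1) ⬝ᵥ M *ᵥ (Pi.single i 1) = 0 := by rw [dot_single, h]
  have hcol := (hM.dotProduct_mulVec_zero_iff (Pi.single i 1)).mp h0
  have := congrFun hcol j
  fin_cases i <;> fin_cases j <;>
    simpa [mulVec, dotProduct, Fin.sum_univ_two, Pi.single_apply] using this

private lemma sum_zero {a b : ℂ} (ha : 0 ≤ a) (hb : 0 ≤ b) (hab : a + b = 0) : a = 0 := by
  have h1 : a ≤ 0 := by
    calc a ≤ a + b := le_add_of_nonneg_right hb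
    _ = 0 := hab
  exact le_antisymm h1 ha

theorem naive_joint_density_infeasible :
    ¬ ∃ M11 M12 M21 M22 : Matrix (Fin 2) (Fin 2) ℂ,
      M11.PosSemidef ∧ M12.PosSemidef ∧ M21.PosSemidef ∧ M22.PosSemidef ∧
      M11 + M12 = (1/2 : ℂ) • !![1, 0; 0, 0] ∧
      M21 + M22 = (1/2 : ℂ) • !![0, 0; 0, 1] ∧
      M11 + M21 = (1/4 : ℂ) • !![1, -1; -1, 1] ∧
      M12 + M22 = (1/4 : ℂ) • !![1, 1; 1, 1] := by
  rintro ⟨M11, M12, M21, M22, h11, h12, h21, h22, e1, e2, e3, e4⟩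
  -- M11 1 1 = 0
  have hs1 : M11 1 1 + M12 1 1 = 0 := by
    have := congrFun (congrFun e1 1) 1; simpa using this
  have h11d : M11 1 1 = 0 := sum_zero (diag_nonneg h11 1) (diag_nonneg h12 1) hs1
  have h11o : M11 0 1 = 0 := offdiag_zero h11 1 0 h11d
  -- M21 0 0 = 0
  have hs2 : M21 0 0 + M22 0 0 = 0 := by
    have := congrFun (congrFun e2 0) 0; simpa using this
  have h21d : M21 0 0 = 0 := sum_zero (diag_nonneg h21 0) (diag_nonneg h22 0) hs2
  have h21o : M21 1 0 = 0 := offdiag_zero h21 0 1 h21d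
  have h21o' : M21 0 1 = 0 := by
    have := congrFun (congrFun h21.1 0) 1
    simp only [conjTranspose_apply, h21o] at this
    simpa using this.symm
  -- contradiction from e3 at (0,1)
  have := congrFun (congrFun e3 0) 1
  rw [Matrix.add_apply, h11o, h21o'] at this
  simp at this
end

section
/- Let A₁, A₂, B₁, B₂ be n×n Hermitian positive semidefinite complex matrices with tr(A₁) = tr(A₂) = tr(B₁) = tr(B₂) = 1, let λ > 0 and let x₁, x₂, y₁, y₂ ∈ ℝ satisfy (x₂ − x₁)(y₁ − y₂) > 2λ. Then (y₁ − x₁)² + (y₂ − x₂)² + λ‖A₁ − B₁‖_F² + λ‖A₂ − B₂‖_F² > (y₂ − x₁)² + (y₁ − x₂)² + λ‖A₁ − B₂‖_F² + λ‖A₂ − B₁‖_F². -/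
open Matrix ComplexOrder

/-- The squared Frobenius norm of a complex matrix. -/
noncomputable def frobSq {n : ℕ} (M : Matrix (Fin n) (Fin n) ℂ) : ℝ :=
  ∑ i, ∑ j, ‖M i j‖ ^ 2

namespace ExchangeAux

/-- Real part of the Frobenius inner product. -/
noncomputable def ipR {n : ℕ} (A B : Matrix (Fin n) (Fin n) ℂ) : ℝ :=
  ∑ i, ∑ j, (A i j * (starRingEnd ℂ) (B i j)).re

lemma norm_sq_eq (z : ℂ) : ‖z‖ ^ 2 = (z * (starRingEnd ℂ) z).re := by
  rw [Complex.sq_norm, Complex.normSq_apply, Complex.mul_re]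
  simp [Complex.conj_re, Complex.conj_im]

lemma frob_sub {n : ℕ} (A B : Matrix (Fin n) (Fin n) ℂ) :
    frobSq (A - B) = frobSq A + frobSq B - 2 * ipR A B := by
  unfold frobSq ipR
  have e : ∀ i j : Fin n, ‖(A - B) i j‖ ^ 2
      = ‖A i j‖ ^ 2 + ‖B i j‖ ^ 2 - 2 * (A i j * (starRingEnd ℂ) (B i j)).re := by
    intro i j
    simp only [Matrix.sub_apply, norm_sq_eq, map_sub, mul_sub, sub_mul, Complex.sub_re]
    have hAB : (A i j * (starRingEnd ℂ) (B i j)).re = (B i j * (starRingEnd ℂ) (A i j)).re := by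
      rw [Complex.mul_re, Complex.mul_re]
      simp [Complex.conj_re, Complex.conj_im]
      ring
    rw [hAB]
    ring
  simp only [e, Finset.sum_add_distrib, Finset.sum_sub_distrib, Finset.mul_sum]

lemma ipR_expand {n : ℕ} (A₁ A₂ B₁ B₂ : Matrix (Fin n) (Fin n) ℂ) :
    ipR (A₁ - A₂) (B₁ - B₂) = ipR A₁ B₁ - ipR A₁ B₂ - ipR A₂ B₁ + ipR A₂ B₂ := by
  unfold ipR
  have e : ∀ i j : Fin n, ((A₁ - A₂) i j * (starRingEnd ℂ) ((B₁ - B₂) i j)).re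
      = (A₁ i j * (starRingEnd ℂ) (B₁ i j)).re - (A₁ i j * (starRingEnd ℂ) (B₂ i j)).re
        - (A₂ i j * (starRingEnd ℂ) (B₁ i j)).re + (A₂ i j * (starRingEnd ℂ) (B₂ i j)).re := by
    intro i j
    simp only [Matrix.sub_apply, map_sub, mul_sub, sub_mul, Complex.sub_re]
    ring
  simp only [e, Finset.sum_add_distrib, Finset.sum_sub_distrib]

lemma diag_nonneg {n : ℕ} {A : Matrix (Fin n) (Fin n) ℂ} (hA : A.PosSemidef) (i : Fin n) :
    0 ≤ A i i := by
  have h := hA.dotProduct_mulVec_nonneg (Pi.single i 1)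
  simpa [Matrix.mulVec_single, dotProduct, Pi.star_apply, Pi.single_apply, apply_ite,
    Finset.sum_ite_eq] using h

lemma trace_re_nonneg {n : ℕ} {A : Matrix (Fin n) (Fin n) ℂ} (hA : A.PosSemidef) :
    0 ≤ A.trace.re := by
  have h : (0 : ℂ) ≤ A.trace := by
    rw [Matrix.trace]
    exact Finset.sum_nonneg fun i _ => diag_nonneg hA i
  exact (Complex.le_def.mp h).1

lemma ipR_eq_trace {n : ℕ} (A B : Matrix (Fin n) (Fin n) ℂ) (hB : B.IsHermitian) :
    ipR A B = (A * B).trace.re := by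
  unfold ipR
  rw [Matrix.trace, Complex.re_sum]
  refine Finset.sum_congr rfl fun i _ => ?_
  rw [Matrix.diag_apply, Matrix.mul_apply, Complex.re_sum]
  refine Finset.sum_congr rfl fun j _ => ?_
  congr 1
  rw [← hB.apply j i]
  rfl

open scoped MatrixOrder in
lemma ipR_nonneg {n : ℕ} {A B : Matrix (Fin n) (Fin n) ℂ}
    (hA : A.PosSemidef) (hB : B.PosSemidef) : 0 ≤ ipR A B := by
  rw [ipR_eq_trace A B hB.isHermitian]
  set S := CFC.sqrt A with hS
  have hSS : S * S = A := CFC.sqrt_mul_sqrt_self A hA.nonneg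
  have hherm : Sᴴ = S := (CFC.sqrt_nonneg A).posSemidef.isHermitian
  have hps : (Sᴴ * B * S).PosSemidef := hB.conjTranspose_mul_mul_same S
  have htr : (A * B).trace = (Sᴴ * B * S).trace := by
    rw [hherm, ← hSS, Matrix.trace_mul_cycle, Matrix.trace_mul_cycle]
  rw [htr]
  exact trace_re_nonneg hps

lemma quad {n : ℕ} {A : Matrix (Fin n) (Fin n) ℂ} (hA : A.PosSemidef) (i j : Fin n)
    (hij : i ≠ j) (c : ℂ) :
    0 ≤ ((starRingEnd ℂ) c * (A i i * c + A i j) + (A j i * c + A j j)) := by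
  have h := hA.dotProduct_mulVec_nonneg ((Pi.single i c : Fin n → ℂ) + (Pi.single j 1 : Fin n → ℂ))
  have hx : star ((Pi.single i c : Fin n → ℂ) + (Pi.single j 1 : Fin n → ℂ)) =
      (Pi.single i ((starRingEnd ℂ) c) : Fin n → ℂ) + (Pi.single j 1 : Fin n → ℂ) := by
    funext k
    by_cases hk : k = i <;> by_cases hk' : k = j <;>
      simp_all [Pi.single_apply, Pi.star_apply]
  rw [hx, Matrix.mulVec_add, Matrix.mulVec_single, Matrix.mulVec_single] at h
  simp only [add_dotProduct, single_dotProduct, Pi.add_apply, hij, hij.symm,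
    Pi.single_apply, if_neg, if_pos, ite_true, ite_false, one_mul, mul_zero, add_zero,
    mul_add, zero_add, Pi.smul_apply, MulOpposite.smul_eq_mul_unop, MulOpposite.unop_op,
    Matrix.col_apply, mul_one] at h
  exact h.trans_eq (by ring)

lemma entry_bound {n : ℕ} {A : Matrix (Fin n) (Fin n) ℂ} (hA : A.PosSemidef) (i j : Fin n) :
    ‖A i j‖ ^ 2 ≤ (A i i).re * (A j j).re := by
  have ha : 0 ≤ (A i i).re := (Complex.le_def.mp (diag_nonneg hA i)).1
  have hd : 0 ≤ (A j j).re := (Complex.le_def.mp (diag_nonneg hA j)).1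
  rcases eq_or_ne i j with rfl | hij
  · have h0 := diag_nonneg hA i
    have him : (A i i).im = 0 := ((Complex.le_def.mp h0).2).symm
    rw [norm_sq_eq, Complex.mul_re, Complex.conj_re, Complex.conj_im, him]
    ring_nf
    exact le_refl _
  · by_cases hb : A i j = 0
    · rw [hb]; simpa using mul_nonneg ha hd
    have hji : A j i = (starRingEnd ℂ) (A i j) := by
      have := congrFun (congrFun hA.isHermitian j) i
      rw [Matrix.conjTranspose_apply] at this
      exact this.symm
    have hc : 0 < ‖A i j‖ ^ 2 := by
      have : 0 < ‖A i j‖ := norm_pos_iff.mpr hb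
      positivity
    set C := ‖A i j‖ ^ 2 with hC
    have hCC : (starRingEnd ℂ) (A i j) * A i j = ((C : ℝ) : ℂ) := by
      rw [mul_comm, Complex.mul_conj, hC]
      norm_cast
      rw [Complex.normSq_eq_norm_sq]
    have key : ∀ t : ℝ, 0 ≤ (A i i).re * C * (t * t) + 2 * C * t + (A j j).re := by
      intro t
      have h := quad hA i j hij ((t : ℂ) * A i j)
      rw [show ((starRingEnd ℂ) ((t : ℂ) * A i j) * (A i i * ((t : ℂ) * A i j) + A i j)
            + (A j i * ((t : ℂ) * A i j) + A j j))
          = (((A i i).re * C * (t * t) + 2 * C * t : ℝ) : ℂ) + A j j by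
        rw [hji, _root_.map_mul, Complex.conj_ofReal]
        push_cast
        have him : (A i i).im = 0 := ((Complex.le_def.mp (diag_nonneg hA i)).2).symm
        have hAre : ((A i i).re : ℂ) = A i i := by
          rw [Complex.ext_iff]; simp [him]
        rw [hAre]
        linear_combination ((t : ℂ) * (t : ℂ) * A i i + 2 * (t : ℂ)) * hCC] at h
      have h' := (Complex.le_def.mp h).1
      rw [Complex.add_re, Complex.ofReal_re] at h'
      simp only [Complex.zero_re] at h'
      linarith
    have hdisc : discrim ((A i i).re * C) (2 * C) ((A j j).re) ≤ 0 :=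
      discrim_le_zero fun t => (key t).trans_eq (by ring)
    rw [discrim] at hdisc
    nlinarith [hdisc, hc]

lemma frobSq_le_one {n : ℕ} {A : Matrix (Fin n) (Fin n) ℂ} (hA : A.PosSemidef)
    (htr : A.trace = 1) : frobSq A ≤ 1 := by
  have h1 : frobSq A ≤ ∑ i, ∑ j, (A i i).re * (A j j).re :=
    Finset.sum_le_sum fun i _ => Finset.sum_le_sum fun j _ => entry_bound hA i j
  have h2 : ∑ i, ∑ j, (A i i).re * (A j j).re
      = (∑ i, (A i i).re) * (∑ j, (A j j).re) := (Finset.sum_mul_sum _ _ _ _).symm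
  have h3 : ∑ i, (A i i).re = A.trace.re := by
    rw [Matrix.trace, Complex.re_sum]; rfl
  rw [h2, h3, htr] at h1
  simpa using h1

lemma ipR_le_half {n : ℕ} (X Y : Matrix (Fin n) (Fin n) ℂ) :
    ipR X Y ≤ (frobSq X + frobSq Y) / 2 := by
  unfold ipR frobSq
  have e : ∀ i j : Fin n, (X i j * (starRingEnd ℂ) (Y i j)).re
      ≤ (‖X i j‖ ^ 2 + ‖Y i j‖ ^ 2) / 2 := by
    intro i j
    have h1 : (X i j * (starRingEnd ℂ) (Y i j)).re ≤ ‖X i j‖ * ‖Y i j‖ := by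
      calc (X i j * (starRingEnd ℂ) (Y i j)).re
          ≤ ‖X i j * (starRingEnd ℂ) (Y i j)‖ := Complex.re_le_norm _
        _ = ‖X i j‖ * ‖Y i j‖ := by
            rw [norm_mul, Complex.norm_conj]
    nlinarith [sq_nonneg (‖X i j‖ - ‖Y i j‖)]
  calc ∑ i, ∑ j, (X i j * (starRingEnd ℂ) (Y i j)).re
      ≤ ∑ i, ∑ j, (‖X i j‖ ^ 2 + ‖Y i j‖ ^ 2) / 2 :=
        Finset.sum_le_sum fun i _ => Finset.sum_le_sum fun j _ => e i j
    _ = (∑ i, ∑ j, ‖X i j‖ ^ 2 + ∑ i, ∑ j, ‖Y i j‖ ^ 2) / 2 := by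
        rw [← Finset.sum_add_distrib, Finset.sum_div]
        exact Finset.sum_congr rfl fun i _ => by
          rw [← Finset.sum_add_distrib, Finset.sum_div]

end ExchangeAux

open ExchangeAux

theorem exchange_inequality {n : ℕ}
    (A₁ A₂ B₁ B₂ : Matrix (Fin n) (Fin n) ℂ)
    (hA₁ : A₁.PosSemidef) (hA₂ : A₂.PosSemidef)
    (hB₁ : B₁.PosSemidef) (hB₂ : B₂.PosSemidef)
    (hA₁tr : A₁.trace = 1) (hA₂tr : A₂.trace = 1)
    (hB₁tr : B₁.trace = 1) (hB₂tr : B₂.trace = 1)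
    (lam : ℝ) (hlam : 0 < lam)
    (x₁ x₂ y₁ y₂ : ℝ) (h : (x₂ - x₁) * (y₁ - y₂) > 2 * lam) :
    (y₁ - x₁) ^ 2 + (y₂ - x₂) ^ 2 + lam * frobSq (A₁ - B₁) + lam * frobSq (A₂ - B₂) >
      (y₂ - x₁) ^ 2 + (y₁ - x₂) ^ 2 + lam * frobSq (A₁ - B₂) + lam * frobSq (A₂ - B₁) := by
  have e1 : frobSq (A₁ - B₂) + frobSq (A₂ - B₁) - frobSq (A₁ - B₁) - frobSq (A₂ - B₂)
      = 2 * ipR (A₁ - A₂) (B₁ - B₂) := by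
    rw [frob_sub, frob_sub, frob_sub, frob_sub, ipR_expand]
    ring
  have hXA : frobSq (A₁ - A₂) ≤ 2 := by
    rw [frob_sub]
    have h1 := ipR_nonneg hA₁ hA₂
    have h2 := frobSq_le_one hA₁ hA₁tr
    have h3 := frobSq_le_one hA₂ hA₂tr
    linarith
  have hXB : frobSq (B₁ - B₂) ≤ 2 := by
    rw [frob_sub]
    have h1 := ipR_nonneg hB₁ hB₂
    have h2 := frobSq_le_one hB₁ hB₁tr
    have h3 := frobSq_le_one hB₂ hB₂tr
    linarith
  have hT : ipR (A₁ - A₂) (B₁ - B₂) ≤ 2 := by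
    have := ipR_le_half (A₁ - A₂) (B₁ - B₂)
    linarith
  have hlT : lam * (2 * ipR (A₁ - A₂) (B₁ - B₂)) ≤ lam * 4 := by nlinarith
  nlinarith [e1, hlT, h, hlam]
end

section
/- Let A₁, A₂, B₁, B₂ be n×n Hermitian positive semidefinite complex matrices with trace 1, let λ > 0, let x₁, x₂, y₁, y₂ ∈ ℝ with (x₂ − x₁)(y₁ − y₂) > 2λ, and let m₁₁ > 0, m₂₂ ≥ m₁₁, m₁₂ ≥ 0, m₂₁ ≥ 0. Then Σ_{i,j∈{1,2}} m_{ij}((x_i − y_j)² + λ‖A_i − B_j‖_F²) > (m₁₁ + m₁₂)((x₁ − y₂)² + λ‖A₁ − B₂‖_F²) + (m₁₁ + m₂₁)((x₂ − y₁)² + λ‖A₂ − B₁‖_F²) + (m₂₂ − m₁₁)((x₂ − y₂)² + λ‖A₂ − B₂‖_F²). In other words, rearranging the mass strictly reduces the transportation cost when the support violates 2λ-monotonicity. -/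
open Matrix ComplexOrder
open scoped MatrixOrder

/-- Entrywise Cauchy–Schwarz for a positive semidefinite matrix. -/
lemma psd_entry_sq_le {n : ℕ} {M : Matrix (Fin n) (Fin n) ℂ} (hM : M.PosSemidef) (i j : Fin n) :
    ‖M i j‖ ^ 2 ≤ (M i i).re * (M j j).re := by
  obtain ⟨B, rfl⟩ : ∃ B : Matrix (Fin n) (Fin n) ℂ, M = Bᴴ * B :=
    CStarAlgebra.nonneg_iff_eq_star_mul_self.mp hM.nonneg
  set u : EuclideanSpace ℂ (Fin n) := WithLp.toLp 2 (fun k => B k i) with hu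
  set v : EuclideanSpace ℂ (Fin n) := WithLp.toLp 2 (fun k => B k j) with hv
  have h1 : (Bᴴ * B) i j = inner ℂ u v := by
    simp [Matrix.mul_apply, PiLp.inner_apply, u, v, mul_comm]
  have h2 : ((Bᴴ * B) i i).re = ‖u‖ ^ 2 := by
    rw [show (Bᴴ * B) i i = inner ℂ u u by
      simp [Matrix.mul_apply, PiLp.inner_apply, u, mul_comm, -inner_self_eq_norm_sq_to_K]]
    rw [← inner_self_eq_norm_sq (𝕜 := ℂ)]
    rfl
  have h3 : ((Bᴴ * B) j j).re = ‖v‖ ^ 2 := by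
    rw [show (Bᴴ * B) j j = inner ℂ v v by
      simp [Matrix.mul_apply, PiLp.inner_apply, v, mul_comm, -inner_self_eq_norm_sq_to_K]]
    rw [← inner_self_eq_norm_sq (𝕜 := ℂ)]
    rfl
  rw [h1, h2, h3]
  have := norm_inner_le_norm (𝕜 := ℂ) u v
  nlinarith [norm_nonneg u, norm_nonneg v, norm_nonneg (inner ℂ u v : ℂ)]

/-- The real part of the Frobenius inner product of two PSD matrices is nonnegative. -/
lemma psd_inner_nonneg {n : ℕ} {A B : Matrix (Fin n) (Fin n) ℂ}
    (hA : A.PosSemidef) (hB : B.PosSemidef) :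
    0 ≤ ∑ i, ∑ j, (A i j * (starRingEnd ℂ) (B i j)).re := by
  have hsum : ∑ i, ∑ j, (A i j * (starRingEnd ℂ) (B i j)).re = ((A * Bᴴ).trace).re := by
    simp [Matrix.trace, Matrix.mul_apply, Matrix.diag, Complex.re_sum]
  rw [hsum]
  have hBH : Bᴴ = B := hB.isHermitian
  have hAd : A = CFC.sqrt A * CFC.sqrt A := (CFC.sqrt_mul_sqrt_self A hA.nonneg).symm
  have hBd : B = CFC.sqrt B * CFC.sqrt B := (CFC.sqrt_mul_sqrt_self B hB.nonneg).symm
  set C := CFC.sqrt A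
  set D := CFC.sqrt B
  have hCH : Cᴴ = C := (CFC.sqrt_nonneg A).posSemidef.isHermitian
  have hDH : Dᴴ = D := (CFC.sqrt_nonneg B).posSemidef.isHermitian
  have key : (A * Bᴴ).trace = ((C * D)ᴴ * (C * D)).trace := by
    rw [hBH, hAd, hBd, Matrix.conjTranspose_mul, hCH, hDH,
      show C * C * (D * D) = (C * (C * D)) * D by simp [Matrix.mul_assoc],
      Matrix.trace_mul_comm, Matrix.mul_assoc]
  rw [key]
  have hX : (((C * D)ᴴ * (C * D)).trace).re = ∑ i, ∑ k, ‖(C * D) k i‖ ^ 2 := by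
    simp only [Matrix.trace, Matrix.diag, Matrix.mul_apply, Matrix.conjTranspose_apply,
      Complex.re_sum]
    refine Finset.sum_congr rfl fun i _ => Finset.sum_congr rfl fun k _ => ?_
    rw [RCLike.star_def, mul_comm, Complex.mul_conj]
    simp [Complex.normSq_eq_norm_sq, ← Complex.ofReal_pow]
  rw [hX]; positivity

/-- A PSD matrix with trace 1 has squared Frobenius norm at most 1. -/
lemma frobSq_le_one {n : ℕ} {A : Matrix (Fin n) (Fin n) ℂ}
    (hA : A.PosSemidef) (htr : A.trace = 1) : frobSq A ≤ 1 := by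
  have hdiag : ∑ i, (A i i).re = 1 := by
    have : (A.trace).re = 1 := by rw [htr]; simp
    simpa [Matrix.trace, Matrix.diag, Complex.re_sum] using this
  have hb : frobSq A ≤ ∑ i, ∑ j, (A i i).re * (A j j).re := by
    unfold frobSq
    exact Finset.sum_le_sum fun i _ => Finset.sum_le_sum fun j _ => psd_entry_sq_le hA i j
  calc frobSq A ≤ ∑ i, ∑ j, (A i i).re * (A j j).re := hb
    _ = (∑ i, (A i i).re) * (∑ j, (A j j).re) := by
        rw [Finset.sum_mul]
        exact Finset.sum_congr rfl fun i _ => by rw [Finset.mul_sum]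
    _ = 1 := by rw [hdiag]; ring

lemma frobSq_nonneg {n : ℕ} (M : Matrix (Fin n) (Fin n) ℂ) : 0 ≤ frobSq M := by
  unfold frobSq; positivity

/-- For PSD trace-1 matrices, the squared Frobenius distance is at most 2. -/
lemma frobSq_sub_le_two {n : ℕ} {A B : Matrix (Fin n) (Fin n) ℂ}
    (hA : A.PosSemidef) (hB : B.PosSemidef)
    (hAtr : A.trace = 1) (hBtr : B.trace = 1) : frobSq (A - B) ≤ 2 := by
  have expand : frobSq (A - B)
      = frobSq A + frobSq B - 2 * ∑ i, ∑ j, (A i j * (starRingEnd ℂ) (B i j)).re := by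
    unfold frobSq
    have : ∀ i j : Fin n, ‖(A - B) i j‖ ^ 2
        = ‖A i j‖ ^ 2 + ‖B i j‖ ^ 2 - 2 * (A i j * (starRingEnd ℂ) (B i j)).re := by
      intro i j
      have := Complex.normSq_sub (A i j) (B i j)
      simp only [Matrix.sub_apply]
      simp only [← Complex.sq_norm] at this
      simpa using this
    simp only [this, Finset.sum_sub_distrib, Finset.sum_add_distrib, Finset.mul_sum]
  have h1 := frobSq_le_one hA hAtr
  have h2 := frobSq_le_one hB hBtr
  have h3 := psd_inner_nonneg hA hB
  linarith [expand.le, expand.ge]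

theorem rearrangement_reduces_cost {n : ℕ}
    (A₁ A₂ B₁ B₂ : Matrix (Fin n) (Fin n) ℂ)
    (hA₁ : A₁.PosSemidef) (hA₂ : A₂.PosSemidef)
    (hB₁ : B₁.PosSemidef) (hB₂ : B₂.PosSemidef)
    (hA₁tr : A₁.trace = 1) (hA₂tr : A₂.trace = 1)
    (hB₁tr : B₁.trace = 1) (hB₂tr : B₂.trace = 1)
    (lam : ℝ) (hlam : 0 < lam)
    (x₁ x₂ y₁ y₂ : ℝ) (h : (x₂ - x₁) * (y₁ - y₂) > 2 * lam)
    (m₁₁ m₁₂ m₂₁ m₂₂ : ℝ)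
    (hm₁₁ : 0 < m₁₁) (hm₂₂ : m₁₁ ≤ m₂₂) (hm₁₂ : 0 ≤ m₁₂) (hm₂₁ : 0 ≤ m₂₁) :
    m₁₁ * ((x₁ - y₁) ^ 2 + lam * frobSq (A₁ - B₁)) +
      m₁₂ * ((x₁ - y₂) ^ 2 + lam * frobSq (A₁ - B₂)) +
      m₂₁ * ((x₂ - y₁) ^ 2 + lam * frobSq (A₂ - B₁)) +
      m₂₂ * ((x₂ - y₂) ^ 2 + lam * frobSq (A₂ - B₂)) >
    (m₁₁ + m₁₂) * ((x₁ - y₂) ^ 2 + lam * frobSq (A₁ - B₂)) +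
      (m₁₁ + m₂₁) * ((x₂ - y₁) ^ 2 + lam * frobSq (A₂ - B₁)) +
      (m₂₂ - m₁₁) * ((x₂ - y₂) ^ 2 + lam * frobSq (A₂ - B₂)) := by
  have h12 : frobSq (A₁ - B₂) ≤ 2 := frobSq_sub_le_two hA₁ hB₂ hA₁tr hB₂tr
  have h21 : frobSq (A₂ - B₁) ≤ 2 := frobSq_sub_le_two hA₂ hB₁ hA₂tr hB₁tr
  have h11 : 0 ≤ frobSq (A₁ - B₁) := frobSq_nonneg _
  have h22 : 0 ≤ frobSq (A₂ - B₂) := frobSq_nonneg _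
  have key : (x₁ - y₂) ^ 2 + lam * frobSq (A₁ - B₂) + ((x₂ - y₁) ^ 2 + lam * frobSq (A₂ - B₁))
      < (x₁ - y₁) ^ 2 + lam * frobSq (A₁ - B₁) + ((x₂ - y₂) ^ 2 + lam * frobSq (A₂ - B₂)) := by
    have e1 : lam * frobSq (A₁ - B₂) ≤ 2 * lam := by nlinarith
    have e2 : lam * frobSq (A₂ - B₁) ≤ 2 * lam := by nlinarith
    have e3 : 0 ≤ lam * frobSq (A₁ - B₁) := by positivity
    have e4 : 0 ≤ lam * frobSq (A₂ - B₂) := by positivity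
    have sq : (x₁ - y₁) ^ 2 + (x₂ - y₂) ^ 2 - (x₁ - y₂) ^ 2 - (x₂ - y₁) ^ 2
        = 2 * ((x₂ - x₁) * (y₁ - y₂)) := by ring
    linarith
  have := mul_lt_mul_of_pos_left key hm₁₁
  nlinarith [this]
end

section
/- Let A₁₁, A₁₂, B₂₂, B₁₂ be n×n Hermitian positive semidefinite complex matrices with trace 1, m₁₁ > 0 and m₁₂ ≥ 0, and set Ã = (m₁₁A₁₁ + m₁₂A₁₂)/(m₁₁+m₁₂) and B̃ = (m₁₁B₂₂ + m₁₂B₁₂)/(m₁₁+m₁₂). Then m₁₂·(‖Ã − B̃‖_F² − ‖A₁₂ − B₁₂‖_F²) ≤ 2·m₁₁. -/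
open Matrix ComplexOrder

namespace MixingAux

variable {n : ℕ}

lemma frobSq_nonneg (M : Matrix (Fin n) (Fin n) ℂ) : 0 ≤ frobSq M := by
  unfold frobSq; positivity

lemma frobSq_eq_re_trace (M : Matrix (Fin n) (Fin n) ℂ) :
    frobSq M = ((Mᴴ * M).trace).re := by
  unfold frobSq
  rw [Matrix.trace, Complex.re_sum]
  rw [Finset.sum_comm]
  refine Finset.sum_congr rfl fun j _ => ?_
  rw [Matrix.diag_apply, Matrix.mul_apply, Complex.re_sum]
  refine Finset.sum_congr rfl fun i _ => ?_
  rw [Matrix.conjTranspose_apply]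
  simp [Complex.normSq_eq_norm_sq, mul_comm, Complex.mul_conj]
  norm_cast

lemma star_mulU {A : Matrix (Fin n) (Fin n) ℂ} (hA : A.IsHermitian) :
    star (hA.eigenvectorUnitary : Matrix (Fin n) (Fin n) ℂ) * hA.eigenvectorUnitary = 1 :=
  Unitary.coe_star_mul_self hA.eigenvectorUnitary

lemma trace_eq_sum_eig {A : Matrix (Fin n) (Fin n) ℂ} (hA : A.IsHermitian) :
    A.trace = ∑ i, (hA.eigenvalues i : ℂ) := by
  conv_lhs => rw [hA.spectral_theorem, Unitary.conjStarAlgAut_apply]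
  rw [Matrix.trace_mul_comm, ← mul_assoc, star_mulU hA, one_mul, Matrix.trace_diagonal]
  rfl

lemma trace_sq_eq_sum_eig {A : Matrix (Fin n) (Fin n) ℂ} (hA : A.IsHermitian) :
    (A * A).trace = ∑ i, ((hA.eigenvalues i : ℂ))^2 := by
  set U := (hA.eigenvectorUnitary : Matrix (Fin n) (Fin n) ℂ) with hU
  set D := Matrix.diagonal (RCLike.ofReal ∘ hA.eigenvalues : Fin n → ℂ) with hD
  have key : (U * D * star U) * (U * D * star U) = U * (D * D) * star U := by
    simp only [Matrix.mul_assoc]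
    rw [← Matrix.mul_assoc (star U) U, star_mulU hA, Matrix.one_mul]
  conv_lhs => rw [hA.spectral_theorem, Unitary.conjStarAlgAut_apply, ← hU, ← hD, key]
  rw [Matrix.trace_mul_comm, ← mul_assoc, star_mulU hA, one_mul,
    Matrix.diagonal_mul_diagonal, Matrix.trace_diagonal]
  simp [sq]

lemma re_trace_nonneg {M : Matrix (Fin n) (Fin n) ℂ} (hM : M.PosSemidef) :
    0 ≤ M.trace.re := by
  rw [Matrix.trace, Complex.re_sum]
  refine Finset.sum_nonneg fun i _ => ?_
  have := hM.re_dotProduct_nonneg (Pi.single i 1)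
  simpa [Matrix.mulVec_single, dotProduct, Pi.single_apply] using this

lemma trace_mul_nonneg {A B : Matrix (Fin n) (Fin n) ℂ}
    (hA : A.PosSemidef) (hB : B.PosSemidef) : 0 ≤ ((A * B).trace).re := by
  open MatrixOrder in
  have h1 : A * B = CFC.sqrt A * (CFC.sqrt A * B) := by
    rw [← Matrix.mul_assoc, CFC.sqrt_mul_sqrt_self A hA.nonneg]
  rw [h1, Matrix.trace_mul_comm]
  open MatrixOrder in
  have hpsd : ((CFC.sqrt A)ᴴ * B * CFC.sqrt A).PosSemidef := hB.conjTranspose_mul_mul_same _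
  open MatrixOrder in
  rw [(CFC.sqrt_nonneg A).posSemidef.isHermitian.eq] at hpsd
  exact re_trace_nonneg hpsd

lemma re_trace_sq_le_one {A : Matrix (Fin n) (Fin n) ℂ}
    (hA : A.PosSemidef) (ht : A.trace = 1) : ((A * A).trace).re ≤ 1 := by
  have hH := hA.isHermitian
  have hsum : ∑ i, hH.eigenvalues i = 1 := by
    have := trace_eq_sum_eig hH
    rw [ht] at this
    have : ((∑ i, hH.eigenvalues i : ℝ) : ℂ) = 1 := by push_cast; rw [← this]
    exact_mod_cast this
  have hnn : ∀ i, 0 ≤ hH.eigenvalues i := hA.eigenvalues_nonneg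
  have hle1 : ∀ i, hH.eigenvalues i ≤ 1 := by
    intro i
    rw [← hsum]
    exact Finset.single_le_sum (fun j _ => hnn j) (Finset.mem_univ i)
  rw [trace_sq_eq_sum_eig hH]
  have : (∑ i, ((hH.eigenvalues i : ℂ))^2).re = ∑ i, (hH.eigenvalues i)^2 := by
    rw [Complex.re_sum]; norm_cast
  rw [this, ← hsum]
  exact Finset.sum_le_sum fun i _ => by nlinarith [hnn i, hle1 i]

lemma frobSq_sub_le_two {A B : Matrix (Fin n) (Fin n) ℂ}
    (hA : A.PosSemidef) (hB : B.PosSemidef)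
    (htA : A.trace = 1) (htB : B.trace = 1) : frobSq (A - B) ≤ 2 := by
  rw [frobSq_eq_re_trace]
  rw [(hA.isHermitian.sub hB.isHermitian).eq]
  have expand : (A - B) * (A - B) = A * A - A * B - B * A + B * B := by noncomm_ring
  rw [expand]
  have hBA : ((B * A).trace).re = ((A * B).trace).re := by rw [Matrix.trace_mul_comm]
  have h1 := re_trace_sq_le_one hA htA
  have h2 := re_trace_sq_le_one hB htB
  have h3 := trace_mul_nonneg hA hB
  simp only [Matrix.trace_add, Matrix.trace_sub, Complex.add_re, Complex.sub_re]
  linarith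

lemma frobSq_convex {a b : ℝ} (ha : 0 ≤ a) (hb : 0 ≤ b) (hab : a + b = 1)
    (X Y : Matrix (Fin n) (Fin n) ℂ) :
    frobSq (a • X + b • Y) ≤ a * frobSq X + b * frobSq Y := by
  unfold frobSq
  have key : ∀ i j, ‖(a • X + b • Y) i j‖^2 ≤ a * ‖X i j‖^2 + b * ‖Y i j‖^2 := by
    intro i j
    have h1 : ‖(a • X + b • Y) i j‖ ≤ a * ‖X i j‖ + b * ‖Y i j‖ := by
      simp only [Matrix.add_apply, Matrix.smul_apply]
      refine le_trans (norm_add_le _ _) ?_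
      rw [norm_smul, norm_smul, Real.norm_eq_abs, Real.norm_eq_abs,
        abs_of_nonneg ha, abs_of_nonneg hb]
    have h2 : ‖(a • X + b • Y) i j‖ ^ 2 ≤ (a * ‖X i j‖ + b * ‖Y i j‖) ^ 2 :=
      pow_le_pow_left₀ (norm_nonneg _) h1 2
    nlinarith [mul_nonneg (mul_nonneg ha hb) (sq_nonneg (‖X i j‖ - ‖Y i j‖))]
  refine le_trans (Finset.sum_le_sum fun i _ =>
    Finset.sum_le_sum fun j _ => key i j) (le_of_eq ?_)
  simp [Finset.sum_add_distrib, Finset.mul_sum]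

end MixingAux

theorem mixing_cost_bound {n : ℕ}
    (A₁₁ A₁₂ B₂₂ B₁₂ : Matrix (Fin n) (Fin n) ℂ)
    (hA₁₁ : A₁₁.PosSemidef) (hA₁₂ : A₁₂.PosSemidef)
    (hB₂₂ : B₂₂.PosSemidef) (hB₁₂ : B₁₂.PosSemidef)
    (hA₁₁t : A₁₁.trace = 1) (hA₁₂t : A₁₂.trace = 1)
    (hB₂₂t : B₂₂.trace = 1) (hB₁₂t : B₁₂.trace = 1)
    (m₁₁ m₁₂ : ℝ) (hm₁₁ : 0 < m₁₁) (hm₁₂ : 0 ≤ m₁₂)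
    (tA tB : Matrix (Fin n) (Fin n) ℂ)
    (htA : tA = ((m₁₁ + m₁₂)⁻¹ : ℝ) • (m₁₁ • A₁₁ + m₁₂ • A₁₂))
    (htB : tB = ((m₁₁ + m₁₂)⁻¹ : ℝ) • (m₁₁ • B₂₂ + m₁₂ • B₁₂)) :
    m₁₂ * (frobSq (tA - tB) - frobSq (A₁₂ - B₁₂)) ≤ 2 * m₁₁ := by
  have hs : 0 < m₁₁ + m₁₂ := by linarith
  set a := m₁₁ / (m₁₁ + m₁₂) with haa
  set b := m₁₂ / (m₁₁ + m₁₂) with hbb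
  have ha : 0 ≤ a := by positivity
  have hb : 0 ≤ b := by positivity
  have hab : a + b = 1 := by rw [haa, hbb, ← add_div, div_self hs.ne']
  have hsub : tA - tB = a • (A₁₁ - B₂₂) + b • (A₁₂ - B₁₂) := by
    rw [htA, htB, haa, hbb, div_eq_inv_mul, div_eq_inv_mul, mul_smul, mul_smul]
    module
  have h1 := MixingAux.frobSq_convex ha hb hab (A₁₁ - B₂₂) (A₁₂ - B₁₂)
  have h2 := MixingAux.frobSq_sub_le_two hA₁₁ hB₂₂ hA₁₁t hB₂₂t
  have h3 := MixingAux.frobSq_nonneg (A₁₂ - B₁₂)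
  rw [hsub]
  have haeq : a * (m₁₁ + m₁₂) = m₁₁ := by rw [haa, div_mul_cancel₀ _ hs.ne']
  have hbeq : b * (m₁₁ + m₁₂) = m₁₂ := by rw [hbb, div_mul_cancel₀ _ hs.ne']
  nlinarith [mul_le_mul_of_nonneg_left h1 hm₁₂, mul_nonneg hm₁₂ h3,
    mul_le_mul_of_nonneg_left h2 (mul_nonneg hm₁₂ ha), mul_nonneg (mul_nonneg hm₁₂ hb) h3,
    mul_nonneg ha h3, mul_nonneg hm₁₂ (mul_nonneg ha h3)]
end
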